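/- arXiv:0810.0318 — 2 statements merged into one kernel-verified Lean document; each statement's English description precedes it below -/
import Mathlib

section
/- Let F : [t₁, t₂] → ℝ be differentiable with F(t) ≥ e^e for all t ∈ [t₁, t₂]. Suppose that for all t ∈ [t₁, t₂], F'(t) ≤ F(t) · ln(F(t)) · ln(ln(F(t))). Then for all t ∈ [t₁, t₂], F(t) ≤ exp(exp(exp((t - t₁) + ln(ln(ln(F(t₁))))))). -/
open Real

theorem stmt_12 (t₁ t₂ : ℝ) (ht : t₁ ≤ t₂) (F F' : ℝ → ℝ)
    (hderiv : ∀ t ∈ Set.Icc t₁ t₂, HasDerivAt F (F' t) t)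
    (hF : ∀ t ∈ Set.Icc t₁ t₂, Real.exp (Real.exp 1) ≤ F t)
    (hineq : ∀ t ∈ Set.Icc t₁ t₂,
      F' t ≤ F t * Real.log (F t) * Real.log (Real.log (F t))) :
    ∀ t ∈ Set.Icc t₁ t₂,
      F t ≤ Real.exp (Real.exp (Real.exp
        ((t - t₁) + Real.log (Real.log (Real.log (F t₁)))))) := by
  set G : ℝ → ℝ := fun t => Real.log (Real.log (Real.log (F t))) with hGdef
  have key : ∀ t ∈ Set.Icc t₁ t₂,
      0 < F t ∧ 0 < Real.log (F t) ∧ 0 < Real.log (Real.log (F t)) := by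
    intro t ht'
    have h1 := hF t ht'
    have hpos : 0 < F t := lt_of_lt_of_le (Real.exp_pos _) h1
    have hlog : Real.exp 1 ≤ Real.log (F t) := (Real.le_log_iff_exp_le hpos).mpr h1
    have hlogpos : 0 < Real.log (F t) := lt_of_lt_of_le (Real.exp_pos _) hlog
    have hloglog : (1 : ℝ) ≤ Real.log (Real.log (F t)) := by
      have := (Real.le_log_iff_exp_le hlogpos).mpr hlog
      exact this
    exact ⟨hpos, hlogpos, lt_of_lt_of_le one_pos hloglog⟩
  have hd : ∀ t ∈ Set.Icc t₁ t₂,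
      HasDerivAt G (F' t / (F t * Real.log (F t) * Real.log (Real.log (F t)))) t := by
    intro t ht'
    obtain ⟨hp, hlp, hllp⟩ := key t ht'
    have h1 := hderiv t ht'
    have h2 : HasDerivAt (fun s => Real.log (F s)) ((F t)⁻¹ * F' t) t :=
      (Real.hasDerivAt_log (ne_of_gt hp)).comp t h1
    have h3 : HasDerivAt (fun s => Real.log (Real.log (F s)))
        ((Real.log (F t))⁻¹ * ((F t)⁻¹ * F' t)) t :=
      (Real.hasDerivAt_log (ne_of_gt hlp)).comp (h₂ := Real.log) t h2
    have h4 : HasDerivAt G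
        ((Real.log (Real.log (F t)))⁻¹ * ((Real.log (F t))⁻¹ * ((F t)⁻¹ * F' t))) t :=
      (Real.hasDerivAt_log (ne_of_gt hllp)).comp (h₂ := Real.log) t h3
    convert h4 using 1
    rw [div_eq_mul_inv, mul_inv, mul_inv]
    ring
  set f : ℝ → ℝ := fun t => t - G t with hfdef
  have hdf : ∀ t ∈ Set.Icc t₁ t₂,
      HasDerivAt f (1 - F' t / (F t * Real.log (F t) * Real.log (Real.log (F t)))) t := by
    intro t ht'
    exact (hasDerivAt_id t).sub (hd t ht')
  have mono : MonotoneOn f (Set.Icc t₁ t₂) := by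
    apply monotoneOn_of_deriv_nonneg (convex_Icc t₁ t₂)
    · exact fun x hx => ((hdf x hx).continuousAt).continuousWithinAt
    · intro x hx
      rw [interior_Icc] at hx
      exact ((hdf x (Set.mem_Icc_of_Ioo hx)).differentiableAt).differentiableWithinAt
    · intro x hx
      rw [interior_Icc] at hx
      have hx' := Set.mem_Icc_of_Ioo hx
      rw [(hdf x hx').deriv]
      obtain ⟨hp, hlp, hllp⟩ := key x hx'
      have hD : 0 < F x * Real.log (F x) * Real.log (Real.log (F x)) := by positivity
      have := hineq x hx'
      have : F' x / (F x * Real.log (F x) * Real.log (Real.log (F x))) ≤ 1 :=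
        (div_le_one hD).mpr this
      linarith
  intro t ht'
  have h1 : f t₁ ≤ f t := mono ⟨le_refl t₁, ht⟩ ht' ht'.1
  have hG : G t ≤ (t - t₁) + G t₁ := by
    simp only [hfdef] at h1; linarith
  obtain ⟨hp, hlp, hllp⟩ := key t ht'
  have hFt : F t = Real.exp (Real.exp (Real.exp (G t))) := by
    rw [hGdef]
    simp only []
    rw [Real.exp_log hllp, Real.exp_log hlp, Real.exp_log hp]
  rw [hFt]
  exact Real.exp_le_exp.mpr (Real.exp_le_exp.mpr (Real.exp_le_exp.mpr hG))
end

section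
/- Let n ≥ 1 be a real number and let g : [t₁, t₂] → ℝ be continuous and positive, and let K ≥ 0. Suppose that for every closed subinterval [a, b] ⊆ [t₁, t₂] on which g(t) ≥ e^e for all t ∈ [a, b], one has g(b) ≤ exp((1/n)·exp(exp(b - a))) · g(a). Then for every t ∈ [t₁, t₂], g(t) ≤ exp((1/n)·exp(exp(t₂ - t₁))) · max(g(t₁), e^e). -/
open Real Filter Topology

theorem stmt_14 (t₁ t₂ : ℝ) (ht : t₁ ≤ t₂) (n : ℝ) (hn : 1 ≤ n) (K : ℝ) (hK : 0 ≤ K)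
    (g : ℝ → ℝ) (hg : ContinuousOn g (Set.Icc t₁ t₂))
    (hpos : ∀ t ∈ Set.Icc t₁ t₂, 0 < g t)
    (hyp : ∀ a b : ℝ, t₁ ≤ a → a ≤ b → b ≤ t₂ →
      (∀ t ∈ Set.Icc a b, Real.exp (Real.exp 1) ≤ g t) →
      g b ≤ Real.exp ((1 / n) * Real.exp (Real.exp (b - a))) * g a) :
    ∀ t ∈ Set.Icc t₁ t₂,
      g t ≤ Real.exp ((1 / n) * Real.exp (Real.exp (t₂ - t₁))) *
        max (g t₁) (Real.exp (Real.exp 1)) := by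
  intro t htmem
  obtain ⟨ht1, ht2⟩ := htmem
  set E := Real.exp (Real.exp 1) with hE
  have hEpos : 0 < E := Real.exp_pos _
  have hn0 : 0 < n := lt_of_lt_of_le one_pos hn
  have hinv : 0 ≤ 1 / n := by positivity
  have hCpos : (1 : ℝ) ≤ Real.exp ((1 / n) * Real.exp (Real.exp (t₂ - t₁))) := by
    rw [← Real.exp_zero]
    exact Real.exp_le_exp.mpr (by positivity)
  have hmax : 0 < max (g t₁) E := lt_max_of_lt_right hEpos
  -- monotonicity helper
  have hmono : ∀ a b : ℝ, t₁ ≤ a → b ≤ t₂ → a ≤ b →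
      Real.exp ((1 / n) * Real.exp (Real.exp (b - a))) ≤
      Real.exp ((1 / n) * Real.exp (Real.exp (t₂ - t₁))) := by
    intro a b ha hb hab
    apply Real.exp_le_exp.mpr
    apply mul_le_mul_of_nonneg_left _ hinv
    apply Real.exp_le_exp.mpr
    apply Real.exp_le_exp.mpr
    linarith
  by_cases hlow : g t ≤ E
  · calc g t ≤ E := hlow
      _ ≤ max (g t₁) E := le_max_right _ _
      _ ≤ _ := le_mul_of_one_le_left hmax.le hCpos
  · push_neg at hlow
    -- define T
    set T : Set ℝ := insert t₁ {s ∈ Set.Icc t₁ t | g s ≤ E} with hT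
    have hTne : T.Nonempty := ⟨t₁, Set.mem_insert _ _⟩
    have hTbdd : BddAbove T := by
      refine ⟨t, ?_⟩
      rintro x (rfl | ⟨⟨_, hx2⟩, _⟩)
      · exact ht1
      · exact hx2
    have hTclosed : IsClosed T := by
      have h1 : IsClosed {s ∈ Set.Icc t₁ t | g s ≤ E} := by
        have hcont : ContinuousOn g (Set.Icc t₁ t) :=
          hg.mono (Set.Icc_subset_Icc le_rfl ht2)
        have := hcont.preimage_isClosed_of_isClosed isClosed_Icc (isClosed_Iic (a := E))
        convert this using 1
        ext s; simp [Set.mem_setOf_eq, Set.mem_inter_iff, Set.mem_preimage, Set.mem_Iic]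
      simpa [hT] using (isClosed_singleton (x := t₁)).union h1
    set a := sSup T with ha
    have haT : a ∈ T := hTclosed.csSup_mem hTne hTbdd
    have ht1a : t₁ ≤ a := le_csSup hTbdd (Set.mem_insert _ _)
    have hat : a ≤ t := by
      apply csSup_le hTne
      rintro x (rfl | ⟨⟨_, hx2⟩, _⟩)
      · exact ht1
      · exact hx2
    -- E ≤ g on (a, t]
    have hgt_open : ∀ u, a < u → u ≤ t → E ≤ g u := by
      intro u hau hut
      by_contra hcon
      push_neg at hcon
      have : u ∈ T := Set.mem_insert_iff.mpr (Or.inr ⟨⟨le_trans ht1a hau.le, hut⟩, hcon.le⟩)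
      exact absurd (le_csSup hTbdd this) (not_le.mpr hau)
    -- E ≤ g a
    have hga : E ≤ g a := by
      rcases eq_or_lt_of_le hat with heq | hlt
      · rw [heq]; exact hlow.le
      · -- a < t : use continuity
        have hamem : a ∈ Set.Icc t₁ t₂ := ⟨ht1a, le_trans hat ht2⟩
        have hcw : ContinuousWithinAt g (Set.Ioc a t) a :=
          (hg.continuousWithinAt hamem).mono
            (fun x hx => ⟨le_trans ht1a hx.1.le, le_trans hx.2 ht2⟩)
        have hne : (𝓝[Set.Ioc a t] a).NeBot := by
          apply mem_closure_iff_nhdsWithin_neBot.mp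
          rw [closure_Ioc hlt.ne]
          exact ⟨le_rfl, hat⟩
        refine ge_of_tendsto hcw ?_
        filter_upwards [self_mem_nhdsWithin] with x hx
        exact hgt_open x hx.1 hx.2
    have hall : ∀ u ∈ Set.Icc a t, E ≤ g u := by
      intro u hu
      rcases eq_or_lt_of_le hu.1 with heq | h
      · rw [← heq]; exact hga
      · exact hgt_open u h hu.2
    have hbound := hyp a t ht1a hat ht2 hall
    have hkey : g a ≤ max (g t₁) E := by
      rcases Set.mem_insert_iff.mp haT with heq | ⟨_, hle⟩
      · rw [heq]; exact le_max_left _ _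
      · exact le_trans hle (le_max_right _ _)
    calc g t ≤ Real.exp ((1 / n) * Real.exp (Real.exp (t - a))) * g a := hbound
      _ ≤ Real.exp ((1 / n) * Real.exp (Real.exp (t₂ - t₁))) * max (g t₁) E := by
          apply mul_le_mul (hmono a t ht1a ht2 hat) hkey
            (hpos a ⟨ht1a, le_trans hat ht2⟩).le (le_trans zero_le_one hCpos)
end
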